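/- Planar integral of the 12-6 Lennard-Jones potential: let ε > 0 and let x ∈ ℝ with |x| ≥ 1. Then the integral over the plane of the 12-6 Lennard-Jones potential evaluated at distance r = √(x² + y² + z²), namely ∫_{ℝ²} 4ε·((x² + y² + z²)⁻⁶ − (x² + y² + z²)⁻³) dy dz, equals π·ε·(0.8·|x|⁻¹⁰ − 2·|x|⁻⁴). -/

import Mathlib

open MeasureTheory

open Set Real Filter

private lemma lj_hasDerivAt (a : ℝ) (m : ℕ) (hm : m ≠ 0) (hpos : ∀ r : ℝ, 0 < a + r ^ 2)
    (r : ℝ) :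
    HasDerivAt (fun r : ℝ => -((a + r ^ 2) ^ m)⁻¹ / (2 * m))
      (r * ((a + r ^ 2) ^ (m + 1))⁻¹) r := by
  have h1 : HasDerivAt (fun r : ℝ => a + r ^ 2) (2 * r ^ 1) r :=
    (hasDerivAt_pow 2 r).const_add a
  have h2 := (h1.pow m).inv (pow_ne_zero m (hpos r).ne')
  have h3 := (h2.neg).div_const (2 * m)
  refine h3.congr_deriv ?_
  simp only [Pi.pow_apply]
  have hne : a + r ^ 2 ≠ 0 := (hpos r).ne'
  have hkey : (a + r ^ 2) ^ (m - 1) * (a + r ^ 2) ^ (m + 1) = ((a + r ^ 2) ^ m) ^ 2 := by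
    rw [← pow_add, ← pow_mul]; congr 1; omega
  have hm' : (m : ℝ) ≠ 0 := Nat.cast_ne_zero.mpr hm
  rw [← hkey]
  have hne1 : (a + r ^ 2) ^ (m - 1) ≠ 0 := pow_ne_zero _ hne
  have hne2 : (a + r ^ 2) ^ (m + 1) ≠ 0 := pow_ne_zero _ hne
  field_simp

private lemma lj_tendsto (a : ℝ) (m : ℕ) (hm : m ≠ 0) (hpos : ∀ r : ℝ, 0 < a + r ^ 2) :
    Tendsto (fun r : ℝ => -((a + r ^ 2) ^ m)⁻¹ / (2 * m)) atTop (nhds 0) := by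
  have h1 : Tendsto (fun r : ℝ => a + r ^ 2) atTop atTop :=
    tendsto_atTop_add_const_left _ a (tendsto_pow_atTop two_ne_zero)
  have h2 : Tendsto (fun r : ℝ => ((a + r ^ 2) ^ m)⁻¹) atTop (nhds 0) :=
    (tendsto_pow_atTop hm).comp h1 |>.inv_tendsto_atTop
  have := (h2.neg).div_const (2 * (m : ℝ))
  simpa using this

private lemma lj_integrable (a : ℝ) (m : ℕ) (hm : m ≠ 0) (hpos : ∀ r : ℝ, 0 < a + r ^ 2) :
    IntegrableOn (fun r : ℝ => r * ((a + r ^ 2) ^ (m + 1))⁻¹) (Ioi 0) := by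
  refine integrableOn_Ioi_deriv_of_nonneg' (fun r _ => lj_hasDerivAt a m hm hpos r)
    (fun r hr => ?_) (lj_tendsto a m hm hpos)
  have h1 : (0:ℝ) < r := hr
  have h2 := hpos r
  positivity

private lemma lj_integral (a : ℝ) (ha : 0 < a) (m : ℕ) (hm : m ≠ 0) :
    ∫ r in Ioi (0 : ℝ), r * ((a + r ^ 2) ^ (m + 1))⁻¹ = (a ^ m)⁻¹ / (2 * m) := by
  have hpos : ∀ r : ℝ, 0 < a + r ^ 2 := fun r => by positivity
  have h := integral_Ioi_of_hasDerivAt_of_nonneg' (g' := fun r => r * ((a + r ^ 2) ^ (m + 1))⁻¹)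
    (fun r _ => lj_hasDerivAt a m hm hpos r)
    (fun r hr => by
      have h1 : (0:ℝ) < r := hr
      have h2 := hpos r
      positivity) (lj_tendsto a m hm hpos)
  rw [h]
  norm_num
  ring

/-- Planar integral of the 12-6 Lennard-Jones potential: for `|x| ≥ 1`,
`∫_{ℝ²} 4ε·((x²+y²+z²)⁻⁶ − (x²+y²+z²)⁻³) dy dz = π·ε·(0.8·|x|⁻¹⁰ − 2·|x|⁻⁴)`. -/
theorem lennard_jones_planar_integral
    (ε x : ℝ) (hε : 0 < ε) (hx : 1 ≤ |x|) :
    (∫ p : ℝ × ℝ,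
        4 * ε * (((x ^ 2 + p.1 ^ 2 + p.2 ^ 2) ^ 6)⁻¹ - ((x ^ 2 + p.1 ^ 2 + p.2 ^ 2) ^ 3)⁻¹))
      = Real.pi * ε * (0.8 * (|x| ^ 10)⁻¹ - 2 * (|x| ^ 4)⁻¹) := by
  have ha : (0 : ℝ) < x ^ 2 := by nlinarith [sq_abs x, abs_nonneg x]
  have hpos : ∀ r : ℝ, 0 < x ^ 2 + r ^ 2 := fun r => by positivity
  set f : ℝ × ℝ → ℝ := fun p =>
    4 * ε * (((x ^ 2 + p.1 ^ 2 + p.2 ^ 2) ^ 6)⁻¹ - ((x ^ 2 + p.1 ^ 2 + p.2 ^ 2) ^ 3)⁻¹) with hf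
  rw [← integral_comp_polarCoord_symm f]
  have hptw : ∀ p : ℝ × ℝ, p.1 • f (polarCoord.symm p) =
      (fun r : ℝ => r * (4 * ε * (((x ^ 2 + r ^ 2) ^ 6)⁻¹ - ((x ^ 2 + r ^ 2) ^ 3)⁻¹))) p.1 *
      (fun _ : ℝ => (1 : ℝ)) p.2 := by
    intro p
    have hsq : (p.1 * Real.cos p.2) ^ 2 + (p.1 * Real.sin p.2) ^ 2 = p.1 ^ 2 := by
      have := Real.sin_sq_add_cos_sq p.2; nlinarith [this]
    simp only [hf, polarCoord, OpenPartialHomeomorph.mk_coe_symm, PartialEquiv.coe_symm_mk,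
      smul_eq_mul, mul_one]
    rw [show x ^ 2 + (p.1 * Real.cos p.2) ^ 2 + (p.1 * Real.sin p.2) ^ 2 = x ^ 2 + p.1 ^ 2 by
      rw [add_assoc, hsq]]
  simp only [hptw]
  rw [show polarCoord.target = Ioi (0:ℝ) ×ˢ Ioo (-Real.pi) Real.pi from rfl,
    Measure.volume_eq_prod]
  have hkey : (∫ p : ℝ × ℝ in Ioi (0:ℝ) ×ˢ Ioo (-Real.pi) Real.pi,
      p.1 * (4 * ε * (((x ^ 2 + p.1 ^ 2) ^ 6)⁻¹ - ((x ^ 2 + p.1 ^ 2) ^ 3)⁻¹)) * 1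
        ∂(volume.prod volume))
      = (∫ r in Ioi (0:ℝ), r * (4 * ε * (((x ^ 2 + r ^ 2) ^ 6)⁻¹ - ((x ^ 2 + r ^ 2) ^ 3)⁻¹)))
        * ∫ _ in Ioo (-Real.pi) Real.pi, (1:ℝ) :=
    setIntegral_prod_mul
      (fun r : ℝ => r * (4 * ε * (((x ^ 2 + r ^ 2) ^ 6)⁻¹ - ((x ^ 2 + r ^ 2) ^ 3)⁻¹)))
      (fun _ : ℝ => (1:ℝ)) _ _
  rw [hkey]
  have hI6 := lj_integral (x ^ 2) ha 5 (by norm_num)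
  have hI3 := lj_integral (x ^ 2) ha 2 (by norm_num)
  have hInt6 := lj_integrable (x ^ 2) 5 (by norm_num) hpos
  have hInt3 := lj_integrable (x ^ 2) 2 (by norm_num) hpos
  have hsplit : (∫ r in Ioi (0:ℝ),
      r * (4 * ε * (((x ^ 2 + r ^ 2) ^ 6)⁻¹ - ((x ^ 2 + r ^ 2) ^ 3)⁻¹)))
      = 4 * ε * ((∫ r in Ioi (0:ℝ), r * ((x ^ 2 + r ^ 2) ^ (5 + 1))⁻¹)
        - ∫ r in Ioi (0:ℝ), r * ((x ^ 2 + r ^ 2) ^ (2 + 1))⁻¹) := by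
    rw [← integral_sub hInt6 hInt3, ← integral_const_mul]
    congr 1; funext r; ring_nf
  rw [hsplit, hI6, hI3]
  rw [integral_const]
  simp only [smul_eq_mul, mul_one, Measure.restrict_apply_univ, Real.volume_Ioo]
  rw [Measure.real, Measure.restrict_apply_univ, Real.volume_Ioo, ENNReal.toReal_ofReal (by linarith [Real.pi_pos] : (0:ℝ) ≤ Real.pi - -Real.pi)]
  have h10 : |x| ^ 10 = (x ^ 2) ^ 5 := by rw [show (10:ℕ) = 2 * 5 from rfl, pow_mul, sq_abs]
  have h4 : |x| ^ 4 = (x ^ 2) ^ 2 := by rw [show (4:ℕ) = 2 * 2 from rfl, pow_mul, sq_abs]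
  rw [h10, h4]
  push_cast
  ring
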